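/- arXiv:1410.4095 — 4 statements merged into one kernel-verified Lean document; each statement's English description precedes it below -/
import Mathlib

section
/- For the univariate monomial x^d over a commutative ring R and nonzero steps h_1,...,h_k ∈ R, the k-th order finite difference satisfies Δ_{h_1} ... Δ_{h_k} (x^d) = Σ_{j=k}^{d} ( Σ_{(i_1,...,i_k), each i_ℓ ≥ 1, i_1+...+i_k = j} multinomial(d; i_1,...,i_k, d−j) · h_1^{i_1} ⋯ h_k^{i_k} ) · x^{d−j}. -/
open Finset

private def Tset (k d : ℕ) : Finset (Fin k → ℕ) :=
  (Fintype.piFinset fun _ : Fin k => Finset.range (d + 1)).filter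
    (fun i => (∀ l, 1 ≤ i l) ∧ ∑ l, i l ≤ d)

private lemma mult_cons {k : ℕ} (i0 : ℕ) (i : Fin k → ℕ) :
    Nat.multinomial Finset.univ (Fin.cons i0 i) =
      (i0 + ∑ l, i l).choose i0 * Nat.multinomial Finset.univ i := by
  have hpos : 0 < (Nat.factorial i0) * ∏ l, (i l).factorial := by positivity
  apply Nat.eq_of_mul_eq_mul_left hpos
  have h1 := Nat.multinomial_spec (Finset.univ : Finset (Fin (k+1))) (Fin.cons i0 i)
  have h2 := Nat.multinomial_spec (Finset.univ : Finset (Fin k)) i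
  rw [Fin.prod_univ_succ, Fin.sum_univ_succ] at h1
  simp only [Fin.cons_zero, Fin.cons_succ] at h1
  rw [h1]
  have h3 : Nat.choose (i0 + ∑ l, i l) i0 * (i0.factorial) * ((∑ l, i l).factorial)
      = (i0 + ∑ l, i l).factorial := by
    have := Nat.choose_mul_factorial_mul_factorial (Nat.le_add_right i0 (∑ l, i l))
    simpa using this
  calc (i0 + ∑ l, i l).factorial
      = Nat.choose (i0 + ∑ l, i l) i0 * (i0.factorial) * ((∑ l, i l).factorial) := h3.symm
    _ = Nat.choose (i0 + ∑ l, i l) i0 * (i0.factorial) *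
          ((∏ l, (i l).factorial) * Nat.multinomial Finset.univ i) := by rw [h2]
    _ = i0.factorial * (∏ l, (i l).factorial) *
          (Nat.choose (i0 + ∑ l, i l) i0 * Nat.multinomial Finset.univ i) := by ring

private lemma binom_diff {R : Type*} [CommRing R] (x h0 : R) (m : ℕ) :
    (x + h0) ^ m - x ^ m =
      ∑ i0 ∈ Finset.Icc 1 m, (m.choose i0 : R) * h0 ^ i0 * x ^ (m - i0) := by
  rw [add_comm x h0, add_pow, Finset.sum_range_succ']
  simp only [pow_zero, one_mul, Nat.choose_zero_right, Nat.cast_one, mul_one, Nat.sub_zero]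
  rw [add_sub_cancel_right]
  have : Finset.Icc 1 m = Finset.Ico 1 (m + 1) := by rfl
  rw [this, Finset.sum_Ico_eq_sum_range]
  simp only [Nat.add_sub_cancel]
  apply Finset.sum_congr rfl
  intro i0 _
  rw [add_comm 1 i0]
  ring

private lemma flat {R : Type*} [CommRing R] :
    ∀ (k : ℕ) (h : Fin k → R) (d : ℕ) (x : R),
    ((List.ofFn h).foldr (fun s g => fun y => g (y + s) - g y) (fun y => y ^ d)) x =
      ∑ i ∈ Tset k d,
        ((d.choose (∑ l, i l) * Nat.multinomial Finset.univ i : ℕ) : R) *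
          (∏ l, h l ^ i l) * x ^ (d - ∑ l, i l)
  | 0, h, d, x => by
      simp only [List.ofFn_zero, List.foldr_nil]
      have hT : Tset 0 d = {(fun l => l.elim0 : Fin 0 → ℕ)} := by
        apply Finset.eq_singleton_iff_unique_mem.mpr
        constructor
        · refine Finset.mem_filter.mpr ⟨Fintype.mem_piFinset.mpr ?_, ?_, ?_⟩
          · exact fun a => a.elim0
          · exact fun l => l.elim0
          · simp
        · intro i _
          funext l; exact l.elim0
      rw [hT, Finset.sum_singleton]
      simp [Finset.univ_eq_empty]
  | (k+1), h, d, x => by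
      rw [List.ofFn_succ, List.foldr_cons]
      rw [flat k (fun l => h l.succ) d (x + h 0), flat k (fun l => h l.succ) d x]
      rw [← Finset.sum_sub_distrib]
      have step1 : ∀ i ∈ Tset k d,
          ((d.choose (∑ l, i l) * Nat.multinomial Finset.univ i : ℕ) : R) *
              (∏ l, h l.succ ^ i l) * (x + h 0) ^ (d - ∑ l, i l) -
            ((d.choose (∑ l, i l) * Nat.multinomial Finset.univ i : ℕ) : R) *
              (∏ l, h l.succ ^ i l) * x ^ (d - ∑ l, i l)
          = ∑ i0 ∈ Finset.Icc 1 (d - ∑ l, i l),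
              ((d.choose (∑ l, i l) * Nat.multinomial Finset.univ i : ℕ) : R) *
                (∏ l, h l.succ ^ i l) *
                (((d - ∑ l, i l).choose i0 : R) * h 0 ^ i0 * x ^ (d - ∑ l, i l - i0)) := by
        intro i _
        rw [← mul_sub, binom_diff, Finset.mul_sum]
      rw [Finset.sum_congr rfl step1]
      rw [Finset.sum_sigma']
      refine Finset.sum_nbij' (fun p => Fin.cons p.2 p.1) (fun i' => ⟨Fin.tail i', i' 0⟩)
        ?_ ?_ ?_ ?_ ?_
      · rintro ⟨i, i0⟩ hp
        simp only [Finset.mem_sigma, Tset, Finset.mem_filter, Fintype.mem_piFinset,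
          Finset.mem_range, Finset.mem_Icc] at hp ⊢
        obtain ⟨⟨hpi, h1, hsum⟩, hi0⟩ := hp
        refine ⟨fun l => ?_, fun l => ?_, ?_⟩
        · refine Fin.cases ?_ ?_ l
          · simp only [Fin.cons_zero]; omega
          · intro m; simpa using hpi m
        · refine Fin.cases ?_ ?_ l
          · simp only [Fin.cons_zero]; omega
          · intro m; simpa using h1 m
        · rw [Fin.sum_univ_succ]
          simp only [Fin.cons_zero, Fin.cons_succ]
          omega
      · intro i' hi'
        simp only [Finset.mem_sigma, Tset, Finset.mem_filter, Fintype.mem_piFinset,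
          Finset.mem_range, Finset.mem_Icc] at hi' ⊢
        obtain ⟨hpi, h1, hsum⟩ := hi'
        rw [Fin.sum_univ_succ] at hsum
        refine ⟨⟨fun l => hpi l.succ, fun l => h1 l.succ, ?_⟩, h1 0, ?_⟩
        · simp only [Fin.tail]; omega
        · simp only [Fin.tail]; omega
      · rintro ⟨i, i0⟩ _
        simp [Fin.tail_cons]
      · intro i' _
        simp [Fin.cons_self_tail]
      · rintro ⟨i, i0⟩ hp
        simp only [Finset.mem_sigma, Tset, Finset.mem_filter, Fintype.mem_piFinset,
          Finset.mem_range, Finset.mem_Icc] at hp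
        obtain ⟨⟨hpi, h1, hsum⟩, hi01, hi02⟩ := hp
        have hsum' : ∑ l, (Fin.cons i0 i : Fin (k+1) → ℕ) l = i0 + ∑ l, i l := by
          rw [Fin.sum_univ_succ]; simp
        have hprod : ∏ l, h l ^ (Fin.cons i0 i : Fin (k+1) → ℕ) l
            = h 0 ^ i0 * ∏ l, h l.succ ^ i l := by
          rw [Fin.prod_univ_succ]; simp
        rw [hsum', hprod, mult_cons]
        have hchoose : d.choose (i0 + ∑ l, i l) * (i0 + ∑ l, i l).choose i0
            = d.choose (∑ l, i l) * (d - ∑ l, i l).choose i0 := by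
          rw [Nat.choose_symm_add]
          have := Nat.choose_mul (n := d) (k := i0 + ∑ l, i l) (s := ∑ l, i l)
            (Nat.le_add_left _ _)
          simpa using this
        have hexp : d - (i0 + ∑ l, i l) = d - ∑ l, i l - i0 := by omega
        rw [hexp]
        push_cast [← mul_assoc, hchoose]
        ring

private lemma coeff_eq {k : ℕ} (d j : ℕ) (hj : j ≤ d) (i : Fin k → ℕ)
    (hsum : ∑ l, i l = j) :
    (d.factorial / ((∏ l, (i l).factorial) * (d - j).factorial) : ℕ)
      = d.choose j * Nat.multinomial Finset.univ i := by
  apply Nat.div_eq_of_eq_mul_left (by positivity)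
  have h2 := Nat.multinomial_spec (Finset.univ : Finset (Fin k)) i
  rw [hsum] at h2
  calc d.factorial = d.choose j * j.factorial * (d - j).factorial :=
        (Nat.choose_mul_factorial_mul_factorial hj).symm
    _ = d.choose j * ((∏ l, (i l).factorial) * Nat.multinomial Finset.univ i) *
          (d - j).factorial := by rw [h2]
    _ = d.choose j * Nat.multinomial Finset.univ i *
          ((∏ l, (i l).factorial) * (d - j).factorial) := by ring

/-- Explicit formula for the k-th order finite difference of the monomial `x^d`
with steps `h_1, …, h_k`, in terms of multinomial coefficients. -/
theorem finite_difference_monomial_formula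
    {R : Type*} [CommRing R] {k d : ℕ} (h : Fin k → R) (hh : ∀ l, h l ≠ 0)
    (x : R) :
    ((List.ofFn h).foldr (fun s g => fun y => g (y + s) - g y)
        (fun y => y ^ d)) x =
      ∑ j ∈ Finset.Icc k d,
        (∑ i ∈ (Fintype.piFinset fun _ : Fin k => Finset.range (d + 1)) |>.filter
            (fun i => (∀ l, 1 ≤ i l) ∧ ∑ l, i l = j),
          ((d.factorial / ((∏ l, (i l).factorial) * (d - j).factorial) : ℕ) : R) *
            ∏ l, h l ^ i l) * x ^ (d - j) := by
  rw [flat k h d x]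
  have hmaps : ∀ i ∈ Tset k d, (∑ l, i l) ∈ Finset.Icc k d := by
    intro i hi
    simp only [Tset, Finset.mem_filter] at hi
    obtain ⟨_, h1, hsum⟩ := hi
    rw [Finset.mem_Icc]
    refine ⟨?_, hsum⟩
    calc k = ∑ _l : Fin k, 1 := by simp
      _ ≤ ∑ l, i l := Finset.sum_le_sum fun l _ => h1 l
  rw [← Finset.sum_fiberwise_of_maps_to hmaps
    (fun i => ((d.choose (∑ l, i l) * Nat.multinomial Finset.univ i : ℕ) : R) *
      (∏ l, h l ^ i l) * x ^ (d - ∑ l, i l))]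
  apply Finset.sum_congr rfl
  intro j hj
  rw [Finset.mem_Icc] at hj
  rw [Finset.sum_mul]
  have hset : (Tset k d).filter (fun i => ∑ l, i l = j)
      = (Fintype.piFinset fun _ : Fin k => Finset.range (d + 1)).filter
          (fun i => (∀ l, 1 ≤ i l) ∧ ∑ l, i l = j) := by
    rw [Tset, Finset.filter_filter]
    apply Finset.filter_congr
    intro i _
    constructor
    · rintro ⟨⟨h1, _⟩, hs⟩; exact ⟨h1, hs⟩
    · rintro ⟨h1, hs⟩; exact ⟨⟨h1, by omega⟩, hs⟩
  rw [hset]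
  apply Finset.sum_congr rfl
  intro i hi
  simp only [Finset.mem_filter] at hi
  obtain ⟨_, _, hsum⟩ := hi
  rw [coeff_eq d j hj.2 i hsum, hsum, mul_assoc]
end

section
/- Let f : GF(p)^n → GF(p) be a polynomial function, t = ∏_{j=1}^k x_{i_j}^{m_j} with each 1 ≤ m_j ≤ p−1, and write f = t·f_{S(t)} + r where no monomial of r is divisible by t. Let f_t denote the iterated finite difference of f (m_j times w.r.t. x_{i_j}, steps 1). Then deg(f_t) ≤ deg(f_{S(t)}). In particular, if deg(t) = deg(f) − 1, then f_t is linear or constant (total degree at most 1). -/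
open MvPolynomial

set_option linter.unusedSectionVars false

namespace FDAux

variable {σ : Type*} [DecidableEq σ] {R : Type*} [CommRing R]

noncomputable def delta (a : σ) (P : MvPolynomial σ R) : MvPolynomial σ R :=
  bind₁ (Function.update X a (X a + 1)) P - P

lemma delta_zero (a : σ) : delta a (0 : MvPolynomial σ R) = 0 := by simp [delta]

lemma delta_add (a : σ) (P Q : MvPolynomial σ R) :
    delta a (P + Q) = delta a P + delta a Q := by
  simp only [delta, map_add]; ring

lemma delta_sum {ι : Type*} (a : σ) (s : Finset ι) (f : ι → MvPolynomial σ R) :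
    delta a (∑ x ∈ s, f x) = ∑ x ∈ s, delta a (f x) := by
  classical
  induction s using Finset.induction with
  | empty => simp [delta_zero]
  | insert _ _ h ih => rw [Finset.sum_insert h, delta_add, ih, Finset.sum_insert h]

lemma tau_monomial_fix (a : σ) (s : σ →₀ ℕ) (c : R) (h : s a = 0) :
    bind₁ (Function.update X a (X a + 1)) (monomial s c) = monomial s c := by
  rw [bind₁_monomial]
  have h2 : ∀ j ∈ s.support, Function.update X a (X a + 1) j ^ s j
      = (X j : MvPolynomial σ R) ^ s j := by
    intro j hj
    have : j ≠ a := by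
      rintro rfl
      simp [Finsupp.mem_support_iff, h] at hj
    rw [Function.update_of_ne this]
  rw [Finset.prod_congr rfl h2, monomial_eq]
  rfl

lemma delta_monomial (a : σ) (s : σ →₀ ℕ) (c : R) :
    delta a (monomial s c) =
      monomial (s.erase a) c *
        ∑ k ∈ Finset.range (s a), X a ^ k * ((s a).choose k : MvPolynomial σ R) := by
  have hdec : (monomial s c : MvPolynomial σ R)
      = monomial (s.erase a) c * X a ^ (s a) := by
    rw [X_pow_eq_monomial, monomial_mul, mul_one, Finsupp.erase_add_single]
  have htau : bind₁ (Function.update X a (X a + 1)) (monomial s c)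
      = monomial (s.erase a) c * (X a + 1) ^ (s a) := by
    conv_lhs => rw [hdec]
    rw [map_mul, map_pow, tau_monomial_fix a _ _ (by simp), bind₁_X_right,
      Function.update_self]
  have hbin : ((X a + 1 : MvPolynomial σ R)) ^ (s a)
      = (∑ k ∈ Finset.range (s a), X a ^ k * ((s a).choose k : MvPolynomial σ R))
        + X a ^ (s a) := by
    rw [add_pow, Finset.sum_range_succ]
    simp [Nat.choose_self]
  rw [delta, htau, hbin]
  conv_lhs => rw [hdec]
  ring

lemma degreeOf_monomial_le (b : σ) (u : σ →₀ ℕ) (c : R) :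
    degreeOf b (monomial u c : MvPolynomial σ R) ≤ u b := by
  apply degreeOf_le_iff.mpr
  intro v hv
  have := support_monomial_subset hv
  simp only [Finset.mem_singleton] at this
  subst this; exact le_rfl

lemma totalDegree_X_pow_mul_choose (a : σ) (k e : ℕ) :
    ((X a ^ k * (e : MvPolynomial σ R))).totalDegree ≤ k := by
  refine (totalDegree_mul _ _).trans ?_
  have h1 : ((X a : MvPolynomial σ R) ^ k).totalDegree ≤ k := by
    rw [X_pow_eq_monomial]
    refine (totalDegree_monomial_le _ _).trans ?_
    simp
  have h2 : ((e : MvPolynomial σ R)).totalDegree = 0 := by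
    rw [← map_natCast (C : R →+* MvPolynomial σ R) e, totalDegree_C]
  omega

lemma degreeOf_X_pow_mul_choose (b a : σ) (k e : ℕ) :
    degreeOf b ((X a ^ k * (e : MvPolynomial σ R))) ≤ Finsupp.single a k b := by
  refine (degreeOf_mul_le _ _ _).trans ?_
  have h1 : degreeOf b ((X a : MvPolynomial σ R) ^ k) ≤ Finsupp.single a k b := by
    rw [X_pow_eq_monomial]; exact degreeOf_monomial_le _ _ _
  have h2 : degreeOf b ((e : MvPolynomial σ R)) = 0 := by
    rw [← map_natCast (C : R →+* MvPolynomial σ R) e, degreeOf_C]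
  omega

lemma erase_sum_add (a : σ) (s : σ →₀ ℕ) :
    ((s.erase a).sum fun _ e => e) + s a = s.sum fun _ e => e := by
  have : ((Finsupp.single a (s a)).sum fun _ e => e)
      + ((s.erase a).sum fun _ e => e) = s.sum fun _ e => e := by
    rw [← Finsupp.sum_add_index' (fun _ => rfl) (fun _ _ _ => rfl),
      Finsupp.single_add_erase]
  rw [Finsupp.sum_single_index rfl] at this
  omega

lemma totalDegree_delta_monomial (a : σ) (s : σ →₀ ℕ) (c : R) :
    (delta a (monomial s c)).totalDegree ≤ (s.sum fun _ e => e) - 1 := by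
  rw [delta_monomial]
  rcases Nat.eq_zero_or_pos (s a) with h | h
  · simp [h]
  · refine (totalDegree_mul _ _).trans ?_
    have h1 := totalDegree_monomial_le (s.erase a) c
    have h2 : (∑ k ∈ Finset.range (s a),
        (X a : MvPolynomial σ R) ^ k * ((s a).choose k : MvPolynomial σ R)).totalDegree
        ≤ s a - 1 := by
      refine totalDegree_finsetSum_le ?_
      intro k hk
      have := totalDegree_X_pow_mul_choose (R := R) a k ((s a).choose k)
      have hk' := Finset.mem_range.mp hk
      omega
    have h3 := erase_sum_add a s
    simp only [Function.id_def] at h1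
    omega

lemma degreeOf_delta_monomial_le (b a : σ) (s : σ →₀ ℕ) (c : R) :
    degreeOf b (delta a (monomial s c)) ≤ s b := by
  rw [delta_monomial]
  refine (degreeOf_mul_le _ _ _).trans ?_
  have h1 := degreeOf_monomial_le b (s.erase a) c
  have h2 : degreeOf b (∑ k ∈ Finset.range (s a),
      (X a : MvPolynomial σ R) ^ k * ((s a).choose k : MvPolynomial σ R)) ≤
      Finsupp.single a (s a) b := by
    refine (degreeOf_sum_le _ _ _).trans (Finset.sup_le ?_)
    intro k hk
    refine (degreeOf_X_pow_mul_choose b a k _).trans ?_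
    rcases eq_or_ne b a with rfl | hba
    · simp only [Finsupp.single_eq_same]
      exact le_of_lt (Finset.mem_range.mp hk)
    · simp [Finsupp.single_eq_of_ne' (Ne.symm hba)]
  rcases eq_or_ne b a with rfl | hba
  · simp only [Finsupp.erase_same] at h1
    simp only [Finsupp.single_eq_same] at h2
    omega
  · rw [Finsupp.erase_ne hba] at h1
    rw [Finsupp.single_eq_of_ne' (Ne.symm hba)] at h2
    omega

lemma degreeOf_delta_monomial_self (a : σ) (s : σ →₀ ℕ) (c : R) :
    degreeOf a (delta a (monomial s c)) ≤ s a - 1 := by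
  rw [delta_monomial]
  refine (degreeOf_mul_le _ _ _).trans ?_
  have h1 := degreeOf_monomial_le a (s.erase a) c
  simp only [Finsupp.erase_same] at h1
  have h2 : degreeOf a (∑ k ∈ Finset.range (s a),
      (X a : MvPolynomial σ R) ^ k * ((s a).choose k : MvPolynomial σ R)) ≤ s a - 1 := by
    refine (degreeOf_sum_le _ _ _).trans (Finset.sup_le ?_)
    intro k hk
    refine (degreeOf_X_pow_mul_choose a a k _).trans ?_
    simp only [Finsupp.single_eq_same]
    have := Finset.mem_range.mp hk
    omega
  omega

lemma delta_eq_sum (a : σ) (P : MvPolynomial σ R) :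
    delta a P = ∑ v ∈ P.support, delta a (monomial v (coeff v P)) := by
  conv_lhs => rw [P.as_sum]
  rw [delta_sum]

lemma totalDegree_delta (a : σ) (P : MvPolynomial σ R) :
    (delta a P).totalDegree ≤ P.totalDegree - 1 := by
  rw [delta_eq_sum]
  refine totalDegree_finsetSum_le ?_
  intro v hv
  have h1 := totalDegree_delta_monomial a v (coeff v P)
  have h2 := le_totalDegree hv
  omega

lemma degreeOf_delta_le (b a : σ) (P : MvPolynomial σ R) :
    degreeOf b (delta a P) ≤ degreeOf b P := by
  rw [delta_eq_sum]
  refine (degreeOf_sum_le _ _ _).trans (Finset.sup_le ?_)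
  intro v hv
  have h1 := degreeOf_delta_monomial_le b a v (coeff v P)
  have h2 := monomial_le_degreeOf b hv
  omega

lemma degreeOf_delta_self (a : σ) (P : MvPolynomial σ R) :
    degreeOf a (delta a P) ≤ degreeOf a P - 1 := by
  rw [delta_eq_sum]
  refine (degreeOf_sum_le _ _ _).trans (Finset.sup_le ?_)
  intro v hv
  have h1 := degreeOf_delta_monomial_self a v (coeff v P)
  have h2 := monomial_le_degreeOf a hv
  omega

lemma delta_of_degreeOf_eq_zero (a : σ) (P : MvPolynomial σ R)
    (h : degreeOf a P = 0) : delta a P = 0 := by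
  rw [delta, sub_eq_zero]
  conv_lhs => rw [P.as_sum]
  rw [map_sum]
  conv_rhs => rw [P.as_sum]
  refine Finset.sum_congr rfl ?_
  intro v hv
  refine tau_monomial_fix a v _ ?_
  have := monomial_le_degreeOf a hv
  omega

lemma delta_iterate_zero (a : σ) (mm : ℕ) : (delta a)^[mm] (0 : MvPolynomial σ R) = 0 := by
  induction mm with
  | zero => rfl
  | succ d ih => rw [Function.iterate_succ_apply, delta_zero, ih]

lemma delta_iterate_add (a : σ) (mm : ℕ) (P Q : MvPolynomial σ R) :
    (delta a)^[mm] (P + Q) = (delta a)^[mm] P + (delta a)^[mm] Q := by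
  induction mm generalizing P Q with
  | zero => rfl
  | succ d ih => rw [Function.iterate_succ_apply, delta_add, ih,
      Function.iterate_succ_apply, Function.iterate_succ_apply]

lemma totalDegree_delta_iterate (a : σ) (mm : ℕ) (P : MvPolynomial σ R) :
    ((delta a)^[mm] P).totalDegree ≤ P.totalDegree - mm := by
  induction mm generalizing P with
  | zero => simp
  | succ d ih =>
    rw [Function.iterate_succ_apply']
    have h1 := totalDegree_delta a ((delta a)^[d] P)
    have h2 := ih P
    omega

lemma degreeOf_delta_iterate_le (b a : σ) (mm : ℕ) (P : MvPolynomial σ R) :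
    degreeOf b ((delta a)^[mm] P) ≤ degreeOf b P := by
  induction mm generalizing P with
  | zero => simp
  | succ d ih =>
    rw [Function.iterate_succ_apply']
    exact (degreeOf_delta_le b a _).trans (ih P)

lemma delta_iterate_eq_zero (a : σ) (mm : ℕ) (P : MvPolynomial σ R)
    (h : degreeOf a P < mm) : (delta a)^[mm] P = 0 := by
  induction mm generalizing P with
  | zero => omega
  | succ d ih =>
    rw [Function.iterate_succ_apply]
    by_cases h0 : degreeOf a P = 0
    · rw [delta_of_degreeOf_eq_zero a P h0, delta_iterate_zero]
    · refine ih _ ?_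
      have := degreeOf_delta_self a P
      omega

variable {ι : Type*} (idx : ι → σ) (mm : ι → ℕ)

lemma foldr_zero (L : List ι) :
    L.foldr (fun j P₀ => (delta (idx j))^[mm j] P₀) (0 : MvPolynomial σ R) = 0 := by
  induction L with
  | nil => rfl
  | cons j L ih => rw [List.foldr_cons, ih, delta_iterate_zero]

lemma foldr_add (L : List ι) (P Q : MvPolynomial σ R) :
    L.foldr (fun j P₀ => (delta (idx j))^[mm j] P₀) (P + Q)
      = L.foldr (fun j P₀ => (delta (idx j))^[mm j] P₀) P
        + L.foldr (fun j P₀ => (delta (idx j))^[mm j] P₀) Q := by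
  induction L generalizing P Q with
  | nil => rfl
  | cons j L ih => rw [List.foldr_cons, ih, delta_iterate_add, List.foldr_cons,
      List.foldr_cons]

lemma foldr_sum {κ' : Type*} (L : List ι) (s : Finset κ') (f : κ' → MvPolynomial σ R) :
    L.foldr (fun j P₀ => (delta (idx j))^[mm j] P₀) (∑ x ∈ s, f x)
      = ∑ x ∈ s, L.foldr (fun j P₀ => (delta (idx j))^[mm j] P₀) (f x) := by
  classical
  induction s using Finset.induction with
  | empty => simp [foldr_zero]
  | insert _ _ h ih => rw [Finset.sum_insert h, foldr_add, ih, Finset.sum_insert h]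

lemma foldr_totalDegree (L : List ι) (P : MvPolynomial σ R) :
    (L.foldr (fun j P₀ => (delta (idx j))^[mm j] P₀) P).totalDegree
      ≤ P.totalDegree - (L.map mm).sum := by
  induction L generalizing P with
  | nil => simp
  | cons j L ih =>
    rw [List.foldr_cons]
    have h1 := totalDegree_delta_iterate (idx j) (mm j)
      (L.foldr (fun j P₀ => (delta (idx j))^[mm j] P₀) P)
    have h2 := ih P
    simp only [List.map_cons, List.sum_cons]
    omega

lemma foldr_degreeOf (b : σ) (L : List ι) (P : MvPolynomial σ R) :
    degreeOf b (L.foldr (fun j P₀ => (delta (idx j))^[mm j] P₀) P) ≤ degreeOf b P := by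
  induction L generalizing P with
  | nil => simp
  | cons j L ih =>
    rw [List.foldr_cons]
    exact (degreeOf_delta_iterate_le b _ _ _).trans (ih P)

lemma foldr_eq_zero (L : List ι) (P : MvPolynomial σ R)
    (h : ∃ j ∈ L, degreeOf (idx j) P < mm j) :
    L.foldr (fun j P₀ => (delta (idx j))^[mm j] P₀) P = 0 := by
  induction L generalizing P with
  | nil => simp at h
  | cons j₀ L ih =>
    rw [List.foldr_cons]
    by_cases h' : ∃ j ∈ L, degreeOf (idx j) P < mm j
    · rw [ih P h', delta_iterate_zero]
    · obtain ⟨j, hjm, hj⟩ := h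
      have hj0 : j = j₀ := by
        rcases List.mem_cons.mp hjm with h1 | h1
        · exact h1
        · exact absurd ⟨j, h1, hj⟩ h'
      subst hj0
      refine delta_iterate_eq_zero _ _ _ ?_
      exact lt_of_le_of_lt (foldr_degreeOf idx mm _ L P) hj

lemma prod_monomial_one {κ' : Type*} (s : Finset κ') (u : κ' → (σ →₀ ℕ)) :
    (∏ j ∈ s, (monomial (u j) (1 : R))) = monomial (∑ j ∈ s, u j) 1 := by
  classical
  induction s using Finset.induction with
  | empty => simp
  | insert _ _ h ih => rw [Finset.prod_insert h, Finset.sum_insert h, ih, monomial_mul, one_mul]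

end FDAux


open FDAux in

/-- Write `f = t·f_{S(t)} + r` with `t = ∏ x_{i_j}^{m_j}` and no monomial of `r`
divisible by `t`. Then the iterated finite difference `f_t` satisfies
`deg f_t ≤ deg f_{S(t)}`; in particular if `deg t = deg f − 1` then `f_t` is
linear or constant. -/
theorem finite_difference_degree_bound
    (p : ℕ) [Fact p.Prime] {n k : ℕ}
    (i : Fin k → Fin n) (hi : Function.Injective i)
    (m : Fin k → ℕ) (hm : ∀ j, 1 ≤ m j) (hmp : ∀ j, m j ≤ p - 1)
    (f g r : MvPolynomial (Fin n) (ZMod p))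
    (hfred : ∀ j : Fin n, f.degreeOf j ≤ p - 1)
    (hf : f = (∏ j, X (i j) ^ m j) * g + r)
    (hr : ∀ s ∈ r.support, ∃ j : Fin k, s (i j) < m j)
    (ft : MvPolynomial (Fin n) (ZMod p))
    (hft : ft = (List.finRange k).foldr
      (fun j P₀ =>
        (fun P : MvPolynomial (Fin n) (ZMod p) =>
            bind₁ (Function.update X (i j) (X (i j) + 1)) P - P)^[m j] P₀)
      f) :
    ft.totalDegree ≤ g.totalDegree ∧
      ((∏ j, X (i j) ^ m j : MvPolynomial (Fin n) (ZMod p)).totalDegree =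
          f.totalDegree - 1 →
        ft.totalDegree ≤ 1) := by
  haveI : Fact (1 < p) := ⟨(Fact.out : p.Prime).one_lt⟩
  set t : MvPolynomial (Fin n) (ZMod p) := ∏ j, X (i j) ^ m j with htdef
  have hft' : ft = (List.finRange k).foldr
      (fun j P₀ => (delta (i j))^[m j] P₀) f := hft
  -- t as a monomial
  set sT : Fin n →₀ ℕ := ∑ j, Finsupp.single (i j) (m j) with hsT
  have ht : t = monomial sT 1 := by
    rw [htdef]
    have : ∀ j ∈ Finset.univ, (X (i j) : MvPolynomial (Fin n) (ZMod p)) ^ m j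
        = monomial (Finsupp.single (i j) (m j)) 1 := fun j _ => X_pow_eq_monomial
    rw [Finset.prod_congr rfl this, prod_monomial_one]
  have hsTapp : ∀ j, sT (i j) = m j := by
    intro j
    rw [hsT]
    rw [Finsupp.finset_sum_apply]
    rw [Finset.sum_eq_single j]
    · simp
    · intro j' _ hj'
      exact Finsupp.single_eq_of_ne' (fun h => hj' (hi h))
    · simp
  have hsTsum : (sT.sum fun _ e => e) = ∑ j, m j := by
    have key : ∀ (s : Finset (Fin k)),
        (((∑ j ∈ s, Finsupp.single (i j) (m j)) : Fin n →₀ ℕ).sum fun _ e => e)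
          = ∑ j ∈ s, m j := by
      intro s
      induction s using Finset.induction with
      | empty => simp
      | insert _ _ h ih =>
        rw [Finset.sum_insert h, Finsupp.sum_add_index' (fun _ => rfl) (fun _ _ _ => rfl),
          ih, Finset.sum_insert h, Finsupp.sum_single_index rfl]
    rw [hsT, key]
  -- support of t*g inside support of f
  have hsup : (t * g).support ⊆ f.support := by
    intro s hs
    have hs' := support_mul _ _ hs
    rw [ht] at hs'
    obtain ⟨u, hu, v, hv, rfl⟩ := Finset.mem_add.mp hs'
    have hu' : u = sT := Finset.mem_singleton.mp (support_monomial_subset hu)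
    subst hu'
    have hrz : coeff (sT + v) r = 0 := by
      by_contra hc
      obtain ⟨j, hj⟩ := hr _ (mem_support_iff.mpr hc)
      have : (sT + v) (i j) = m j + v (i j) := by
        rw [Finsupp.add_apply, hsTapp]
      omega
    have : coeff (sT + v) f = coeff (sT + v) (t * g) := by
      rw [hf, coeff_add, hrz, add_zero]
    rw [mem_support_iff, this]
    exact mem_support_iff.mp hs
  -- first part
  have hfold_r : (List.finRange k).foldr
      (fun j P₀ => (delta (i j))^[m j] P₀) r = 0 := by
    conv_lhs => rw [r.as_sum]
    rw [foldr_sum]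
    refine Finset.sum_eq_zero ?_
    intro v hv
    obtain ⟨j, hj⟩ := hr v hv
    refine foldr_eq_zero _ _ _ _ ⟨j, List.mem_finRange j, ?_⟩
    exact lt_of_le_of_lt (degreeOf_monomial_le _ _ _) hj
  have hft2 : ft = (List.finRange k).foldr
      (fun j P₀ => (delta (i j))^[m j] P₀) (t * g) := by
    rw [hft', hf, foldr_add, hfold_r, add_zero, htdef]
  have hsum_list : ((List.finRange k).map m).sum = ∑ j, m j := by
    rw [Fin.sum_univ_def]
  have part1 : ft.totalDegree ≤ g.totalDegree := by
    rw [hft2]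
    have h1 := foldr_totalDegree (fun j : Fin k => i j) m (List.finRange k) (t * g)
    have h2 : (t * g).totalDegree ≤ (∑ j, m j) + g.totalDegree := by
      refine (totalDegree_mul _ _).trans ?_
      have : t.totalDegree ≤ ∑ j, m j := by
        rw [ht, totalDegree_monomial _ (one_ne_zero)]
        omega
      omega
    rw [hsum_list] at h1
    omega
  refine ⟨part1, ?_⟩
  intro hdeg
  rcases eq_or_ne g 0 with rfl | hg
  · exact le_trans part1 (by simp)
  -- pick top monomial of g
  obtain ⟨s₀, hs₀mem, hs₀⟩ := Finset.exists_mem_eq_sup g.support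
    (Finset.nonempty_iff_ne_empty.mpr (mt support_eq_empty.mp hg)) (fun v => v.sum fun _ e => e)
  have hs₀' : g.totalDegree = s₀.sum fun _ e => e := hs₀
  have hmemtg : sT + s₀ ∈ (t * g).support := by
    rw [mem_support_iff, ht, coeff_monomial_mul, one_mul]
    exact mem_support_iff.mp hs₀mem
  have hle : ((sT + s₀).sum fun _ e => e) ≤ f.totalDegree :=
    le_totalDegree (hsup hmemtg)
  have hadd : ((sT + s₀).sum fun _ e => e)
      = (sT.sum fun _ e => e) + (s₀.sum fun _ e => e) :=
    Finsupp.sum_add_index' (fun _ => rfl) (fun _ _ _ => rfl)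
  have htT : t.totalDegree = sT.sum fun _ e => e := by
    rw [ht, totalDegree_monomial _ (one_ne_zero)]
  omega
end

section
/- Let f : GF(p)^n → GF(p) be a polynomial function, t = ∏_{j=1}^k x_{i_j}^{m_j}, and write f = t·f_{S(t)} + r with no monomial of r divisible by t. If f_{S(t)} does not depend on any of the variables x_{i_1},...,x_{i_k}, then the iterated finite difference f_t (m_j times w.r.t. each x_{i_j}, steps 1) equals the constant multiple m_1! ⋯ m_k! · f_{S(t)}. -/
open MvPolynomial

namespace FDiffAux

set_option linter.unusedSectionVars false

variable {n : ℕ} {R : Type*} [CommRing R] [Nontrivial R]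

/-- The shift substitution `X v ↦ X v + 1`. -/
noncomputable def sig (v : Fin n) :
    MvPolynomial (Fin n) R →ₐ[R] MvPolynomial (Fin n) R :=
  bind₁ (Function.update X v (X v + 1))

/-- The finite-difference operator as a linear endomorphism. -/
noncomputable def del (v : Fin n) : Module.End R (MvPolynomial (Fin n) R) :=
  (sig v).toLinearMap - LinearMap.id

lemma del_apply (v : Fin n) (P : MvPolynomial (Fin n) R) :
    del v P = sig v P - P := rfl

lemma sig_X (v : Fin n) : sig v (X v : MvPolynomial (Fin n) R) = X v + 1 := by
  simp [sig]

lemma sig_monomial_fixed (v : Fin n) (t : Fin n →₀ ℕ) (ht : t v = 0) (c : R) :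
    sig v (monomial t c) = monomial t c := by
  rw [sig, bind₁, aeval_monomial, monomial_eq, algebraMap_eq]
  congr 1
  apply Finsupp.prod_congr
  intro w hw
  rw [Function.update_of_ne]
  rintro rfl
  exact (Finsupp.mem_support_iff.mp hw) ht

lemma monomial_decomp (v : Fin n) (s : Fin n →₀ ℕ) (c : R) :
    (monomial s c : MvPolynomial (Fin n) R)
      = X v ^ (s v) * monomial (s.erase v) c := by
  rw [X_pow_eq_monomial, monomial_mul, one_mul, Finsupp.single_add_erase]

lemma sig_monomial (v : Fin n) (s : Fin n →₀ ℕ) (c : R) :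
    sig v (monomial s c) = (X v + 1) ^ (s v) * monomial (s.erase v) c := by
  rw [monomial_decomp v s c, map_mul, map_pow, sig_X,
    sig_monomial_fixed v _ (Finsupp.erase_same) c]

lemma sig_fixed {v : Fin n} {Q : MvPolynomial (Fin n) R} (h : degreeOf v Q = 0) :
    sig v Q = Q := by
  conv_lhs => rw [Q.as_sum]
  rw [map_sum]
  conv_rhs => rw [Q.as_sum]
  refine Finset.sum_congr rfl fun s hs => ?_
  exact sig_monomial_fixed v s (Nat.le_zero.mp (h ▸ monomial_le_degreeOf v hs)) _

lemma del_fixed {v : Fin n} {Q : MvPolynomial (Fin n) R} (h : degreeOf v Q = 0) :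
    del v Q = 0 := by rw [del_apply, sig_fixed h, sub_self]

lemma degreeOf_monomial_le (v : Fin n) (s : Fin n →₀ ℕ) (c : R) :
    degreeOf v (monomial s c : MvPolynomial (Fin n) R) ≤ s v :=
  degreeOf_le_iff.mpr fun t ht => by
    classical
    rcases Finset.mem_singleton.mp (support_monomial_subset ht) with rfl
    exact le_rfl

lemma degreeOf_X_pow_le (v w : Fin n) (a : ℕ) :
    degreeOf w (X v ^ a : MvPolynomial (Fin n) R) ≤ if w = v then a else 0 := by
  classical
  refine (degreeOf_pow_le w _ a).trans ?_
  rw [degreeOf_X]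
  split <;> simp

lemma degreeOf_X_pow_le_self (v : Fin n) (a : ℕ) :
    degreeOf v (X v ^ a : MvPolynomial (Fin n) R) ≤ a := by
  simpa using degreeOf_X_pow_le v v a

lemma degreeOf_shift_pow_le (v w : Fin n) (a : ℕ) :
    degreeOf w ((X v + 1) ^ a : MvPolynomial (Fin n) R) ≤ if w = v then a else 0 := by
  classical
  refine (degreeOf_pow_le w _ a).trans ?_
  have h1 : degreeOf w (X v + 1 : MvPolynomial (Fin n) R) ≤ if w = v then 1 else 0 := by
    refine (degreeOf_add_le w _ _).trans ?_
    rw [degreeOf_X, ← C_1, degreeOf_C]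
    split <;> simp
  calc a * degreeOf w (X v + 1 : MvPolynomial (Fin n) R)
      ≤ a * (if w = v then 1 else 0) := Nat.mul_le_mul_left a h1
    _ ≤ _ := by split <;> simp

lemma degreeOf_binom_le (v : Fin n) (a d : ℕ) (h : a ≤ d + 1) :
    degreeOf v ((X v + 1) ^ a - X v ^ a : MvPolynomial (Fin n) R) ≤ d := by
  rcases Nat.eq_zero_or_pos a with rfl | ha
  · simp
  have hexp : ((X v + 1) ^ a : MvPolynomial (Fin n) R)
      = ∑ j ∈ Finset.range (a + 1), X v ^ j * 1 ^ (a - j) * ((a.choose j : ℕ) : MvPolynomial (Fin n) R) :=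
    add_pow (X v) 1 a
  rw [Finset.sum_range_succ] at hexp
  have hlast : (X v : MvPolynomial (Fin n) R) ^ a * 1 ^ (a - a) * ((a.choose a : ℕ) : MvPolynomial (Fin n) R)
      = X v ^ a := by simp
  rw [hlast] at hexp
  have : ((X v + 1) ^ a - X v ^ a : MvPolynomial (Fin n) R)
      = ∑ j ∈ Finset.range a, X v ^ j * 1 ^ (a - j) * ((a.choose j : ℕ) : MvPolynomial (Fin n) R) := by
    rw [hexp]; ring
  rw [this]
  refine (degreeOf_sum_le v _ _).trans (Finset.sup_le fun j hj => ?_)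
  have hj' : j ≤ d := by
    have := Finset.mem_range.mp hj
    omega
  calc degreeOf v (X v ^ j * 1 ^ (a - j) * ((a.choose j : ℕ) : MvPolynomial (Fin n) R))
      ≤ degreeOf v (X v ^ j * 1 ^ (a - j)) + degreeOf v (((a.choose j : ℕ) : MvPolynomial (Fin n) R)) :=
        degreeOf_mul_le _ _ _
    _ ≤ j := by
        rw [one_pow, mul_one, ← map_natCast (C : R →+* MvPolynomial (Fin n) R), degreeOf_C,
          add_zero]
        exact degreeOf_X_pow_le_self v j
    _ ≤ d := hj'

lemma del_monomial (v : Fin n) (s : Fin n →₀ ℕ) (c : R) :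
    del v (monomial s c)
      = ((X v + 1) ^ (s v) - X v ^ (s v)) * monomial (s.erase v) c := by
  rw [del_apply, sig_monomial, sub_mul, ← monomial_decomp v s c]

lemma degreeOf_del_le_pred (v : Fin n) (P : MvPolynomial (Fin n) R) (d : ℕ)
    (h : degreeOf v P ≤ d + 1) : degreeOf v (del v P) ≤ d := by
  conv_lhs => rw [P.as_sum, map_sum]
  refine (degreeOf_sum_le v _ _).trans (Finset.sup_le fun s hs => ?_)
  rw [del_monomial]
  calc degreeOf v (((X v + 1) ^ (s v) - X v ^ (s v)) * monomial (s.erase v) (coeff s P))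
      ≤ degreeOf v ((X v + 1) ^ (s v) - X v ^ (s v))
        + degreeOf v (monomial (s.erase v) (coeff s P) : MvPolynomial (Fin n) R) :=
        degreeOf_mul_le _ _ _
    _ ≤ d + 0 := by
        refine Nat.add_le_add ?_ ?_
        · exact degreeOf_binom_le v _ d ((monomial_le_degreeOf v hs).trans h)
        · exact (degreeOf_monomial_le v _ _).trans (by rw [Finsupp.erase_same])
    _ = d := by omega

lemma del_pow_eq_zero (v : Fin n) :
    ∀ (M : ℕ) (P : MvPolynomial (Fin n) R), degreeOf v P < M → (del v ^ M) P = 0 := by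
  intro M
  induction M with
  | zero => intro P h; omega
  | succ M ih =>
    intro P h
    rw [pow_succ, Module.End.mul_apply]
    rcases Nat.eq_zero_or_pos M with rfl | hM
    · have : degreeOf v P = 0 := by omega
      rw [del_fixed this, map_zero]
    · refine ih _ ?_
      have : degreeOf v (del v P) ≤ M - 1 :=
        degreeOf_del_le_pred v P (M - 1) (by omega)
      omega

lemma degreeOf_sig_le (v w : Fin n) (P : MvPolynomial (Fin n) R) :
    degreeOf w (sig v P) ≤ degreeOf w P := by
  conv_lhs => rw [P.as_sum, map_sum]
  refine (degreeOf_sum_le w _ _).trans (Finset.sup_le fun s hs => ?_)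
  rw [sig_monomial]
  refine le_trans ?_ (monomial_le_degreeOf w hs)
  classical
  calc degreeOf w ((X v + 1) ^ (s v) * monomial (s.erase v) (coeff s P))
      ≤ degreeOf w ((X v + 1) ^ (s v) : MvPolynomial (Fin n) R)
        + degreeOf w (monomial (s.erase v) (coeff s P) : MvPolynomial (Fin n) R) :=
        degreeOf_mul_le _ _ _
    _ ≤ (if w = v then s v else 0) + (s.erase v) w :=
        Nat.add_le_add (degreeOf_shift_pow_le v w (s v)) (degreeOf_monomial_le w _ _)
    _ ≤ s w := by
        by_cases hwv : w = v
        · subst hwv; simp [Finsupp.erase_same]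
        · simp [hwv, Finsupp.erase_ne hwv]

lemma degreeOf_del_le (v w : Fin n) (P : MvPolynomial (Fin n) R) :
    degreeOf w (del v P) ≤ degreeOf w P := by
  rw [del_apply]
  exact (degreeOf_sub_le _ _ _).trans (max_le (degreeOf_sig_le v w P) le_rfl)

lemma degreeOf_del_pow_le (v w : Fin n) (M : ℕ) (P : MvPolynomial (Fin n) R) :
    degreeOf w ((del v ^ M) P) ≤ degreeOf w P := by
  induction M with
  | zero => simp
  | succ M ih =>
    rw [pow_succ', Module.End.mul_apply]
    exact (degreeOf_del_le v w _).trans ih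

lemma del_mul_fixed {v : Fin n} {Q : MvPolynomial (Fin n) R} (h : degreeOf v Q = 0)
    (P : MvPolynomial (Fin n) R) : del v (Q * P) = Q * del v P := by
  rw [del_apply, del_apply, map_mul, sig_fixed h, mul_sub]

lemma del_pow_mul_fixed {v : Fin n} {Q : MvPolynomial (Fin n) R} (h : degreeOf v Q = 0)
    (M : ℕ) (P : MvPolynomial (Fin n) R) :
    (del v ^ M) (Q * P) = Q * (del v ^ M) P := by
  induction M with
  | zero => simp
  | succ M ih =>
    rw [pow_succ', Module.End.mul_apply, ih, del_mul_fixed h, ← Module.End.mul_apply, ← pow_succ']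

lemma del_pow_X_self (v : Fin n) :
    ∀ M : ℕ, (del v ^ M) (X v ^ M : MvPolynomial (Fin n) R) = C ((M.factorial : ℕ) : R) := by
  intro M
  induction M with
  | zero => simp
  | succ M ih =>
    rw [pow_succ, Module.End.mul_apply]
    have hdel : del v ((X v : MvPolynomial (Fin n) R) ^ (M + 1))
        = ∑ j ∈ Finset.range (M + 1),
            (Nat.choose (M + 1) j) • ((X v : MvPolynomial (Fin n) R) ^ j) := by
      rw [del_apply, map_pow, sig_X]
      have hexp : ((X v + 1) ^ (M + 1) : MvPolynomial (Fin n) R)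
          = ∑ j ∈ Finset.range (M + 2),
              X v ^ j * 1 ^ (M + 1 - j) * ((Nat.choose (M + 1) j : ℕ) : MvPolynomial (Fin n) R) :=
        add_pow (X v) 1 (M + 1)
      rw [Finset.sum_range_succ] at hexp
      have hlast : (X v : MvPolynomial (Fin n) R) ^ (M + 1) * 1 ^ (M + 1 - (M + 1))
            * ((Nat.choose (M + 1) (M + 1) : ℕ) : MvPolynomial (Fin n) R)
          = X v ^ (M + 1) := by simp
      rw [hexp, hlast, add_sub_cancel_right]
      refine Finset.sum_congr rfl fun j hj => ?_
      rw [one_pow, mul_one, nsmul_eq_mul, mul_comm]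
    rw [hdel, map_sum, Finset.sum_range_succ]
    have hzero : ∀ j ∈ Finset.range M,
        (Nat.choose (M + 1) j) • ((del v ^ M) ((X v : MvPolynomial (Fin n) R) ^ j)) = 0 := by
      intro j hj
      rw [del_pow_eq_zero v M _ ((degreeOf_X_pow_le_self v j).trans_lt (Finset.mem_range.mp hj)),
        smul_zero]
    rw [Finset.sum_congr rfl fun j hj => by rw [map_nsmul, hzero j hj]]
    rw [Finset.sum_const_zero, zero_add, map_nsmul, ih, Nat.choose_succ_self_right]
    rw [nsmul_eq_mul, ← map_natCast (C : R →+* MvPolynomial (Fin n) R) (M + 1), ← map_mul]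
    congr 1
    rw [Nat.factorial_succ]
    push_cast
    ring


section Fold

variable {k : ℕ}

/-- Fold of iterated finite-difference operators along a list. -/
noncomputable def FL (i : Fin k → Fin n) (m : Fin k → ℕ) :
    List (Fin k) → Module.End R (MvPolynomial (Fin n) R)
  | [] => LinearMap.id
  | j :: L => (del (i j) ^ m j) ∘ₗ FL i m L

variable (i : Fin k → Fin n) (m : Fin k → ℕ)

lemma FL_nil (P : MvPolynomial (Fin n) R) : FL i m [] P = P := rfl

lemma FL_cons (j : Fin k) (L : List (Fin k)) (P : MvPolynomial (Fin n) R) :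
    FL i m (j :: L) P = (del (i j) ^ m j) (FL i m L P) := rfl

lemma degreeOf_FL_le (w : Fin n) :
    ∀ (L : List (Fin k)) (P : MvPolynomial (Fin n) R),
      degreeOf w (FL i m L P) ≤ degreeOf w P
  | [], P => le_rfl
  | j :: L, P => by
      rw [FL_cons]
      exact (degreeOf_del_pow_le _ _ _ _).trans (degreeOf_FL_le w L P)

lemma FL_kill :
    ∀ (L : List (Fin k)) (P : MvPolynomial (Fin n) R) (j₀ : Fin k), j₀ ∈ L →
      degreeOf (i j₀) P < m j₀ → FL i m L P = 0
  | [], P, j₀, hmem, _ => absurd hmem List.not_mem_nil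
  | j :: L, P, j₀, hmem, hdeg => by
      rw [FL_cons]
      by_cases hL : j₀ ∈ L
      · rw [FL_kill L P j₀ hL hdeg, map_zero]
      · have hj : j = j₀ := by
          rcases List.mem_cons.mp hmem with h | h
          · exact h.symm
          · exact absurd h hL
        subst hj
        exact del_pow_eq_zero (i j) (m j) _
          ((degreeOf_FL_le i m (i j) L P).trans_lt hdeg)

lemma FL_mul_fixed (Q : MvPolynomial (Fin n) R) :
    ∀ (L : List (Fin k)), (∀ j ∈ L, degreeOf (i j) Q = 0) →
      ∀ P : MvPolynomial (Fin n) R, FL i m L (Q * P) = Q * FL i m L P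
  | [], _, P => rfl
  | j :: L, hfix, P => by
      rw [FL_cons, FL_cons, FL_mul_fixed Q L (fun j' hj' => hfix j' (List.mem_cons_of_mem j hj')),
        del_pow_mul_fixed (hfix j List.mem_cons_self)]

lemma FL_prod (hi : Function.Injective i) (g : MvPolynomial (Fin n) R)
    (hg : ∀ j : Fin k, degreeOf (i j) g = 0) :
    ∀ (L : List (Fin k)), L.Nodup →
      FL i m L ((L.map fun j => X (i j) ^ m j).prod * g)
        = C (((L.map fun j => (m j).factorial).prod : ℕ) : R) * g
  | [], _ => by simp [FL_nil]
  | j :: L, hnd => by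
      have hjL : j ∉ L := (List.nodup_cons.mp hnd).1
      have hndL : L.Nodup := (List.nodup_cons.mp hnd).2
      have hfixX : ∀ j' ∈ L, degreeOf (i j') ((X (i j) ^ m j : MvPolynomial (Fin n) R)) = 0 := by
        intro j' hj'
        have hne : i j' ≠ i j := fun h => hjL (hi h ▸ hj')
        have := degreeOf_X_pow_le (R := R) (i j) (i j') (m j)
        rw [if_neg hne] at this
        omega
      rw [List.map_cons, List.prod_cons, mul_assoc, FL_cons,
        FL_mul_fixed i m _ L hfixX, FL_prod hi g hg L hndL]
      set c : R := (((L.map fun j => (m j).factorial).prod : ℕ) : R) with hc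
      have hfixc : degreeOf (i j) (C c * g) = 0 := by
        have := degreeOf_C_mul_le g (i j) c
        have h2 := hg j
        omega
      rw [mul_comm ((X (i j) : MvPolynomial (Fin n) R) ^ m j) (C c * g),
        del_pow_mul_fixed hfixc, del_pow_X_self]
      rw [List.map_cons, List.prod_cons, Nat.cast_mul, map_mul]
      ring

end Fold

end FDiffAux

open FDiffAux in
/-- Write `f = t·f_{S(t)} + r` with `t = ∏ x_{i_j}^{m_j}` and no monomial of `r`
divisible by `t`. If `f_{S(t)}` does not depend on any of the variables
`x_{i_1}, …, x_{i_k}`, then the iterated finite difference `f_t` equals the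
constant multiple `m_1! ⋯ m_k! · f_{S(t)}`. -/
theorem finite_difference_fundamental_independent_case
    (p : ℕ) [Fact p.Prime] {n k : ℕ}
    (i : Fin k → Fin n) (hi : Function.Injective i)
    (m : Fin k → ℕ) (hm : ∀ j, 1 ≤ m j) (hmp : ∀ j, m j ≤ p - 1)
    (f g r : MvPolynomial (Fin n) (ZMod p))
    (hfred : ∀ j : Fin n, f.degreeOf j ≤ p - 1)
    (hf : f = (∏ j, X (i j) ^ m j) * g + r)
    (hr : ∀ s ∈ r.support, ∃ j : Fin k, s (i j) < m j)
    (hg : ∀ j : Fin k, g.degreeOf (i j) = 0)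
    (ft : MvPolynomial (Fin n) (ZMod p))
    (hft : ft = (List.finRange k).foldr
      (fun j P₀ =>
        (fun P : MvPolynomial (Fin n) (ZMod p) =>
            bind₁ (Function.update X (i j) (X (i j) + 1)) P - P)^[m j] P₀)
      f) :
    ft = C ((∏ j, (m j).factorial : ℕ) : ZMod p) * g := by
  -- The fold in the statement is `FL i m (List.finRange k)`.
  have hfun : ∀ (L : List (Fin k)) (P : MvPolynomial (Fin n) (ZMod p)),
      L.foldr (fun j P₀ =>
        (fun P : MvPolynomial (Fin n) (ZMod p) =>
            bind₁ (Function.update X (i j) (X (i j) + 1)) P - P)^[m j] P₀) P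
        = FL i m L P := by
    intro L
    induction L with
    | nil => intro P; rfl
    | cons j L ih =>
      intro P
      have heq : (fun P : MvPolynomial (Fin n) (ZMod p) =>
          bind₁ (Function.update X (i j) (X (i j) + 1)) P - P) = ⇑(del (i j)) := rfl
      rw [List.foldr_cons, ih P, FL_cons, Module.End.pow_apply, heq]
  rw [hfun] at hft
  rw [hf, map_add] at hft
  have hrzero : FL i m (List.finRange k) r = 0 := by
    conv_lhs => rw [r.as_sum, map_sum]
    refine Finset.sum_eq_zero fun s hs => ?_
    obtain ⟨j₀, hj₀⟩ := hr s hs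
    exact FL_kill i m (List.finRange k) _ j₀ (List.mem_finRange j₀)
      ((degreeOf_monomial_le (i j₀) s _).trans_lt hj₀)
  have hprod := FL_prod i m hi g hg (List.finRange k) (List.nodup_finRange k)
  rw [← Fin.prod_univ_def (fun j => (X (i j) : MvPolynomial (Fin n) (ZMod p)) ^ m j),
    ← Fin.prod_univ_def (fun j => (m j).factorial)] at hprod
  rw [hft, hrzero, add_zero, hprod]
end

section
/- Let S_p(a) denote the sum of the base-p digits of a nonnegative integer a. For d = p·d' + d_0 with 0 ≤ d_0 < p, and A = x_0 b_0 + x_1 b_1 + ... + x_{m-1} b_{m-1} where b_0,...,b_{m-1} is a basis of GF(p^m) over GF(p) and x_j are variables over GF(p): the total degree (as a reduced polynomial function over GF(p)) of each GF(p)-coordinate of A^d in the variables x_0,...,x_{m-1} is at most S_p(d). -/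
open MvPolynomial



/-- Reduce exponent `e` to a value `≤ p-1` defining the same power function on `ZMod p`. -/
def redExp (p e : ℕ) : ℕ := if e = 0 then 0 else (e - 1) % (p - 1) + 1

lemma redExp_zero (p : ℕ) : redExp p 0 = 0 := rfl

lemma redExp_le (p e : ℕ) : redExp p e ≤ e := by
  unfold redExp
  split
  · omega
  · have := Nat.mod_le (e - 1) (p - 1); omega

lemma redExp_le_pred (p e : ℕ) (hp : 2 ≤ p) : redExp p e ≤ p - 1 := by
  unfold redExp
  split
  · omega
  · have := Nat.mod_lt (e - 1) (y := p - 1) (by omega); omega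

lemma pow_redExp (p : ℕ) (hp : p.Prime) (x : ZMod p) (e : ℕ) :
    x ^ e = x ^ redExp p e := by
  haveI : Fact p.Prime := ⟨hp⟩
  rcases eq_or_ne e 0 with rfl | he
  · rfl
  unfold redExp
  rw [if_neg he]
  rcases eq_or_ne x 0 with rfl | hx
  · rw [zero_pow he, zero_pow (by omega)]
  · have h1 : x ^ (p - 1) = 1 := ZMod.pow_card_sub_one_eq_one hx
    calc x ^ e = (x ^ (p - 1)) ^ ((e - 1) / (p - 1)) * x ^ ((e - 1) % (p - 1) + 1) := by
          rw [← pow_mul, ← pow_add]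
          congr 1
          have := Nat.div_add_mod (e - 1) (p - 1)
          omega
      _ = x ^ ((e - 1) % (p - 1) + 1) := by rw [h1, one_pow, one_mul]

/-- Reduce a polynomial over `ZMod p` to one with all individual degrees `≤ p-1`,
representing the same function, with no larger total degree. -/
lemma exists_reduced (p : ℕ) (hp : p.Prime) {m : ℕ} (Q : MvPolynomial (Fin m) (ZMod p)) :
    ∃ P : MvPolynomial (Fin m) (ZMod p),
      (∀ j : Fin m, P.degreeOf j ≤ p - 1) ∧
      (∀ x : Fin m → ZMod p, eval x P = eval x Q) ∧
      P.totalDegree ≤ Q.totalDegree := by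
  classical
  set rd : (Fin m →₀ ℕ) → (Fin m →₀ ℕ) := fun s =>
    Finsupp.mapRange (redExp p) (redExp_zero p) s with hrd
  refine ⟨∑ s ∈ Q.support, monomial (rd s) (Q.coeff s), ?_, ?_, ?_⟩
  · intro j
    refine (degreeOf_sum_le _ _ _).trans (Finset.sup_le fun s hs => ?_)
    refine (degreeOf_le_iff.mpr fun t ht => ?_)
    have := support_monomial_subset ht
    simp only [Finset.mem_singleton] at this
    subst this
    simpa [hrd] using redExp_le_pred p (s j) hp.two_le
  · intro x
    rw [eval_eq' x Q, map_sum]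
    refine Finset.sum_congr rfl fun s hs => ?_
    rw [eval_monomial, Finsupp.prod_pow]
    congr 1
    refine Finset.prod_congr rfl fun j _ => ?_
    simp only [hrd, Finsupp.mapRange_apply]
    exact (pow_redExp p hp (x j) (s j)).symm
  · refine (totalDegree_finset_sum _ _).trans (Finset.sup_le fun s hs => ?_)
    refine (totalDegree_monomial_le _ _).trans ?_
    calc (rd s).sum (fun _ e => e) = ∑ j ∈ (rd s).support, redExp p (s j) := by
          simp [Finsupp.sum, hrd]
      _ ≤ ∑ j ∈ (rd s).support, s j :=
          Finset.sum_le_sum fun j _ => redExp_le p (s j)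
      _ ≤ ∑ j ∈ s.support, s j := by
          refine Finset.sum_le_sum_of_subset_of_nonneg ?_ (fun _ _ _ => Nat.zero_le _)
          intro j hj
          simp only [hrd, Finsupp.mem_support_iff, Finsupp.mapRange_apply] at hj ⊢
          intro h; exact hj (by simp [h, redExp_zero])
      _ ≤ Q.totalDegree := le_totalDegree hs

lemma exists_poly_over_F (p : ℕ) (hp : p.Prime) {m : ℕ}
    {F : Type*} [Field F] [Algebra (ZMod p) F] :
    ∀ d : ℕ, ∀ c : Fin m → F,
    ∃ R : MvPolynomial (Fin m) F,
      (∀ x : Fin m → ZMod p,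
        eval (fun j => algebraMap (ZMod p) F (x j)) R = (∑ j, x j • c j) ^ d) ∧
      R.totalDegree ≤ (Nat.digits p d).sum := by
  intro d
  induction d using Nat.strong_induction_on with
  | _ d ih =>
    intro c
    rcases eq_or_ne d 0 with rfl | hd
    · exact ⟨1, by simp, by simp⟩
    have hp2 := hp.two_le
    obtain ⟨R', hR'eval, hR'deg⟩ := ih (d / p) (Nat.div_lt_self (by omega) (by omega))
      (fun j => c j ^ p)
    set L : MvPolynomial (Fin m) F := ∑ j, X j * C (c j) with hL
    have hLdeg : L.totalDegree ≤ 1 := by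
      refine (totalDegree_finset_sum _ _).trans (Finset.sup_le fun j _ => ?_)
      refine (totalDegree_mul _ _).trans ?_
      simp [totalDegree_X, totalDegree_C]
    have hLeval : ∀ x : Fin m → ZMod p,
        eval (fun j => algebraMap (ZMod p) F (x j)) L = ∑ j, x j • c j := by
      intro x
      simp [hL, Algebra.smul_def]
    refine ⟨R' * L ^ (d % p), ?_, ?_⟩
    · intro x
      rw [map_mul, map_pow, hLeval, hR'eval]
      haveI : Fact p.Prime := ⟨hp⟩
      haveI : CharP F p :=
        charP_of_injective_algebraMap (algebraMap (ZMod p) F).injective p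
      have hchar : (∑ j, x j • c j) ^ p = ∑ j, x j • c j ^ p := by
        rw [sum_pow_char]
        refine Finset.sum_congr rfl fun j _ => ?_
        rw [smul_pow, ZMod.pow_card]
      calc (∑ j, x j • c j ^ p) ^ (d / p) * (∑ j, x j • c j) ^ (d % p)
          = ((∑ j, x j • c j) ^ p) ^ (d / p) * (∑ j, x j • c j) ^ (d % p) := by
            rw [hchar]
        _ = (∑ j, x j • c j) ^ d := by
            rw [← pow_mul, ← pow_add]
            congr 1
            have := Nat.div_add_mod d p
            omega
    · refine (totalDegree_mul _ _).trans ?_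
      have h1 : (L ^ (d % p)).totalDegree ≤ d % p := by
        refine (totalDegree_pow _ _).trans ?_
        calc d % p * L.totalDegree ≤ d % p * 1 := Nat.mul_le_mul_left _ hLdeg
          _ = d % p := Nat.mul_one _
      have hds : (Nat.digits p d).sum = d % p + (Nat.digits p (d / p)).sum := by
        rw [Nat.digits_def' hp2 (Nat.pos_of_ne_zero hd)]
        simp
      omega

/-- Each `GF(p)`-coordinate of `A^d`, where `A = x_0 b_0 + ⋯ + x_{m-1} b_{m-1}`
for a basis `b` of `GF(p^m)` over `GF(p)`, is represented by a reduced polynomial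
(of degree at most `p−1` in each variable) over `GF(p)` whose total degree is at
most the sum `S_p(d)` of the base-`p` digits of `d`. -/
theorem coordinate_degree_le_digit_sum
    (p m : ℕ) (hp : p.Prime) (hm : 1 ≤ m)
    {F : Type*} [Field F] [Fintype F] (hcard : Fintype.card F = p ^ m)
    [Algebra (ZMod p) F] (b : Module.Basis (Fin m) (ZMod p) F) (d : ℕ)
    (i : Fin m) :
    ∃ P : MvPolynomial (Fin m) (ZMod p),
      (∀ j : Fin m, P.degreeOf j ≤ p - 1) ∧
      (∀ x : Fin m → ZMod p,
        eval x P = b.repr ((∑ j, x j • b j) ^ d) i) ∧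
      P.totalDegree ≤ (Nat.digits p d).sum := by
  classical
  obtain ⟨R, hReval, hRdeg⟩ := exists_poly_over_F p hp (F := F) d b
  set Q : MvPolynomial (Fin m) (ZMod p) :=
    ∑ s ∈ R.support, monomial s (b.repr (R.coeff s) i) with hQ
  have hQeval : ∀ x : Fin m → ZMod p,
      eval x Q = b.repr ((∑ j, x j • b j) ^ d) i := by
    intro x
    rw [← hReval x, eval_eq' _ R, map_sum, map_sum b.repr, Finsupp.finset_sum_apply]
    refine Finset.sum_congr rfl fun s hs => ?_
    have : R.coeff s * ∏ j, algebraMap (ZMod p) F (x j) ^ s j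
        = (∏ j, x j ^ s j) • R.coeff s := by
      rw [Algebra.smul_def, map_prod, mul_comm]
      simp [map_pow]
    rw [this, map_smul, Finsupp.smul_apply, eval_monomial, Finsupp.prod_pow, smul_eq_mul,
      mul_comm]
  have hQdeg : Q.totalDegree ≤ R.totalDegree := by
    refine (totalDegree_finset_sum _ _).trans (Finset.sup_le fun s hs => ?_)
    exact (totalDegree_monomial_le _ _).trans (le_totalDegree hs)
  obtain ⟨P, hP1, hP2, hP3⟩ := exists_reduced p hp Q
  exact ⟨P, hP1, fun x => (hP2 x).trans (hQeval x), hP3.trans (hQdeg.trans hRdeg)⟩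
end
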